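/- Under the breadth-first delegation rule, if a delegating voter k is assigned guru l through a delegation chain that does not contain voter j, then k is still assigned guru l in the election in which j abstains (i.e., after removing j and all edges incident to j from the delegation graph). -/

import Mathlib

/-- A delegation graph: voters are partitioned into casting, delegating and
abstaining (neither) voters; `weight a b = some x` iff delegating voter `a`
ranks `b` at position `x`. -/
structure DelGraph (V : Type) where
  cast : V → Prop
  deleg : V → Prop
  weight : V → V → Option ℕ

namespace DelGraph

variable {V : Type}

/-- Edge of the delegation graph. -/
def Edge (G : DelGraph V) (a b : V) : Prop := G.weight a b ≠ none

/-- The weight sequence of a chain. -/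
def weights (G : DelGraph V) (c : List V) : List ℕ :=
  (c.zip c.tail).map fun p => (G.weight p.1 p.2).getD 0

/-- A delegation chain for `i` : a repetition-free directed path starting at
the delegating voter `i` and ending at a casting voter. -/
def IsChain (G : DelGraph V) (i : V) (c : List V) : Prop :=
  c.head? = some i ∧ G.deleg i ∧ c.Nodup ∧ List.Chain' G.Edge c ∧
    ∃ j, c.getLast? = some j ∧ G.cast j

/-- Lexicographic (strict) order on weight sequences. -/
def LexLt (u v : List ℕ) : Prop := List.Lex (· < ·) u v

/-- Depth-first delegation: the selected chain has lexicographically minimal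
weight sequence. -/
def DFSelect (G : DelGraph V) (i : V) (c : List V) : Prop :=
  G.IsChain i c ∧ ∀ c', G.IsChain i c' → ¬ LexLt (G.weights c') (G.weights c)

/-- `j` is the guru assigned to `i` by the depth-first delegation rule. -/
def DFGuru (G : DelGraph V) (i j : V) : Prop :=
  ∃ c, G.DFSelect i c ∧ c.getLast? = some j

/-- Breadth-first comparison: shorter length first, lexicographically smaller
weight sequence among equal-length chains. -/
def BFLt (G : DelGraph V) (c' c : List V) : Prop :=
  c'.length < c.length ∨
    (c'.length = c.length ∧ LexLt (G.weights c') (G.weights c))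

/-- Breadth-first delegation: the selected chain is minimal for `BFLt`. -/
def BFSelect (G : DelGraph V) (i : V) (c : List V) : Prop :=
  G.IsChain i c ∧ ∀ c', G.IsChain i c' → ¬ G.BFLt c' c

/-- `j` is the guru assigned to `i` by the breadth-first delegation rule. -/
def BFGuru (G : DelGraph V) (i j : V) : Prop :=
  ∃ c, G.BFSelect i c ∧ c.getLast? = some j

/-- The delegation graph has no directed cycle. -/
def Acyclic (G : DelGraph V) : Prop :=
  ∀ v, ¬ Relation.TransGen G.Edge v v

/-- `G'` is obtained from `G` when the previously abstaining voter `j` joins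
the delegating electorate (adding `j`'s outgoing edges). -/
def Joins (G G' : DelGraph V) (j : V) : Prop :=
  ¬ G.deleg j ∧ ¬ G.cast j ∧ (∀ b, G.weight j b = none) ∧
    (∀ v, G'.cast v ↔ G.cast v) ∧ (∀ v, G'.deleg v ↔ G.deleg v ∨ v = j) ∧
    (∀ a b, a ≠ j → G'.weight a b = G.weight a b)

/-- `G'` is obtained from `G` by removing the delegating voter `j` (she now
abstains): node `j` and all incident edges are deleted. -/
def Removes (G G' : DelGraph V) (j : V) : Prop :=
  (∀ v, G'.cast v ↔ G.cast v) ∧ (∀ v, G'.deleg v ↔ G.deleg v ∧ v ≠ j) ∧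
    (∀ a b, (a = j ∨ b = j) → G'.weight a b = none) ∧
    (∀ a b, a ≠ j → b ≠ j → G'.weight a b = G.weight a b)

end DelGraph

/-- under breadth-first delegation, if `k` is assigned guru `l`
through a chain not containing `j`, then `k` is still assigned guru `l` after
`j` abstains (i.e. `j` and all incident edges are removed). -/
theorem stmt3 {V : Type} (G G' : DelGraph V) (j k l : V) (c : List V)
    (hrem : DelGraph.Removes G G' j)
    (hsel : G.BFSelect k c) (hlast : c.getLast? = some l)
    (hj : j ∉ c) (hkj : k ≠ j) :
    G'.BFGuru k l := by
  obtain ⟨hc, hmin⟩ := hsel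
  obtain ⟨hhead, hdel, hnd, hch, m, hm, hcastm⟩ := hc
  obtain ⟨hcast', hdel', hw0, hw⟩ := hrem
  have notj : ∀ a b, G'.Edge a b → a ≠ j ∧ b ≠ j := by
    intro a b h
    constructor
    · rintro rfl; exact h (hw0 _ _ (Or.inl rfl))
    · rintro rfl; exact h (hw0 _ _ (Or.inr rfl))
  have e'e : ∀ a b, G'.Edge a b → G.Edge a b := by
    intro a b h
    obtain ⟨ha, hb⟩ := notj a b h
    simpa [DelGraph.Edge, hw a b ha hb] using h
  have ee' : ∀ a b, a ≠ j → b ≠ j → G.Edge a b → G'.Edge a b := by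
    intro a b ha hb h; simpa [DelGraph.Edge, hw a b ha hb] using h
  have wcons : ∀ (H : DelGraph V) (a b : V) (t : List V),
      H.weights (a :: b :: t) = (H.weight a b).getD 0 :: H.weights (b :: t) :=
    fun _ _ _ _ => rfl
  have wts : ∀ (d : List V), j ∉ d → G'.weights d = G.weights d := by
    intro d hd
    induction d with
    | nil => rfl
    | cons a t ih =>
      cases t with
      | nil => rfl
      | cons b t' =>
        have ha : a ≠ j := fun h => hd (h ▸ List.mem_cons_self)
        have hb : b ≠ j := fun h => hd (by simp [h])
        have ht : j ∉ b :: t' := fun h => hd (List.mem_cons_of_mem _ h)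
        rw [wcons, wcons, hw a b ha hb, ih ht]
  have chtr : ∀ (d : List V), j ∉ d → List.Chain' G.Edge d →
      List.Chain' G'.Edge d := by
    intro d hd hch
    induction d with
    | nil => exact List.isChain_nil
    | cons a t ih =>
      cases t with
      | nil => exact List.isChain_singleton a
      | cons b t' =>
        obtain ⟨hab, htail⟩ := List.isChain_cons_cons.mp hch
        have ha : a ≠ j := fun h => hd (h ▸ List.mem_cons_self)
        have hb : b ≠ j := fun h => hd (by simp [h])
        have ht : j ∉ b :: t' := fun h => hd (List.mem_cons_of_mem _ h)
        exact List.isChain_cons_cons.mpr ⟨ee' a b ha hb hab, ih ht htail⟩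
  have adj : ∀ (d : List V), List.Chain' G'.Edge d → j ∈ d → d = [j] := by
    intro d hchd hjd
    induction d with
    | nil => cases hjd
    | cons a t ih =>
      cases t with
      | nil =>
        simp only [List.mem_singleton] at hjd
        simp [hjd]
      | cons b t' =>
        obtain ⟨hab, htail⟩ := List.isChain_cons_cons.mp hchd
        exfalso
        rcases List.mem_cons.mp hjd with h | h
        · exact (notj a b hab).1 h.symm
        · have := ih htail h
          have hb : b = j := by
            have : b :: t' = [j] := this
            simpa using congrArg List.head? this
          exact (notj a b hab).2 hb
  -- the chain c is still a chain in G'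
  have hc' : G'.IsChain k c := by
    refine ⟨hhead, (hdel' k).mpr ⟨hdel, hkj⟩, hnd, chtr c hj hch, m, hm, (hcast' m).mpr hcastm⟩
  refine ⟨c, ⟨hc', ?_⟩, hlast⟩
  intro c' hc'' hlt
  obtain ⟨hhead', hdel'', hnd', hch', m', hm', hcast''⟩ := hc''
  have hjc' : j ∉ c' := by
    intro hmem
    have := adj c' hch' hmem
    have : k = j := by
      rw [this] at hhead'
      simpa using hhead'.symm
    exact hkj this
  have hGc' : G.IsChain k c' := by
    refine ⟨hhead', (hdel' k).mp hdel'' |>.1, hnd', List.IsChain.imp (fun a b => e'e a b) hch',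
      m', hm', (hcast' m').mp hcast''⟩
  apply hmin c' hGc'
  rcases hlt with h | ⟨h1, h2⟩
  · exact Or.inl h
  · refine Or.inr ⟨h1, ?_⟩
    rwa [wts c' hjc', wts c hj] at h2
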